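/- Let γ > 0 and let π: Lit_{[n]}(τ) → ℕ be an ℕ-interpretation on universe [n] with the strong (k,γ)-extension property, and assume γn ≥ 2. Then for every formula ψ(x_1,…,x_i) ∈ FO^k(τ) with associated ∞-expression g_ψ and every tuple ā of distinct elements of [n], either (1) π⟦ψ(ā)⟧ = g_ψ[ρ^π_ā] ∈ ℕ, or (2) g_ψ[ρ^π_ā] = ∞ and π⟦ψ(ā)⟧ ≥ γn. -/

import Mathlib

open MeasureTheory Filter Set
open scoped ENNReal BigOperators

/-- A (fully instantiated) literal over the relational vocabulary given by the
relation symbols `R` with arities `ar`, on the universe `A`: a relation symbol,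
a tuple of arguments, and a polarity (`true` = positive atom, `false` = negated atom). -/
structure Lit (R : Type) (ar : R → ℕ) (A : Type) : Type where
  rel : R
  args : Fin (ar rel) → A
  pos : Bool

/-- A (fully instantiated) relational atom. -/
abbrev Atoms (R : Type) (ar : R → ℕ) (A : Type) : Type := (r : R) × (Fin (ar r) → A)

variable {R : Type} {ar : R → ℕ} {A B K : Type}

/-- Renaming of a literal along a map of universes. -/
def Lit.map (f : A → B) (l : Lit R ar A) : Lit R ar B :=
  ⟨l.rel, fun j => f (l.args j), l.pos⟩

/-- A `K`-interpretation (or atomic type) is model-defining / consistent (w.r.t. the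
zero element `z` of `K`) if out of each pair of complementary literals exactly one is
mapped to `z`. -/
def ModelDefining (z : K) (π : Lit R ar A → K) : Prop :=
  ∀ (r : R) (as : Fin (ar r) → A), (π ⟨r, as, true⟩ = z ↔ π ⟨r, as, false⟩ ≠ z)

/-- The atomic `m`-type realised by the tuple `a` in the interpretation `π`. -/
def typeOf {m : ℕ} (π : Lit R ar A → K) (a : Fin m → A) : Lit R ar (Fin m) → K :=
  fun l => π (l.map a)

/-- The tuple `a` (of pairwise distinct elements) realises the atomic `m`-type `ρ` in `π`. -/
def Realizes {m : ℕ} (π : Lit R ar A → K) (a : Fin m → A) (ρ : Lit R ar (Fin m) → K) : Prop :=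
  Function.Injective a ∧ typeOf π a = ρ

/-- The atomic `(m+1)`-type `ρp` extends the atomic `m`-type `ρ`. -/
def Extends {m : ℕ} (ρp : Lit R ar (Fin (m+1)) → K) (ρ : Lit R ar (Fin m) → K) : Prop :=
  ∀ l : Lit R ar (Fin m), ρp (l.map Fin.castSucc) = ρ l

/-- The `k`-extension property of an interpretation `π` (with zero element `z`). -/
def ExtProp (z : K) (π : Lit R ar A → K) (k : ℕ) : Prop :=
  ∀ m, m < k → ∀ ρ : Lit R ar (Fin m) → K, ModelDefining z ρ →
    ∀ ρp : Lit R ar (Fin (m+1)) → K, ModelDefining z ρp → Extends ρp ρ →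
      ∀ a : Fin m → A, Realizes π a ρ →
        ∃ b : A, b ∉ Set.range a ∧ Realizes π (Fin.snoc a b) ρp

/-- A sequence of extended nonnegative reals converges to `L` exponentially fast. -/
def ExpConv (f : ℕ → ℝ≥0∞) (L : ℝ≥0∞) : Prop :=
  ∃ C q : ℝ≥0∞, C ≠ ⊤ ∧ q < 1 ∧ ∀ n, f n ≤ L + C * q ^ n ∧ L ≤ f n + C * q ^ n

/-- The interpretation determined by a sample point: each atom gets a pair
(value of positive literal, value of negated literal). -/
def interpOf (ω : Atoms R ar A → K × K) : Lit R ar A → K :=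
  fun l => if l.pos then (ω ⟨l.rel, l.args⟩).1 else (ω ⟨l.rel, l.args⟩).2

/-- The per-atom distribution: with probability 1/2 the atom is true (its negation
gets value `z`, i.e. false, and its value is sampled from `p`), with probability 1/2
it is false (symmetrically). -/
noncomputable def atomMeasure [MeasurableSpace K] (z : K) (p : Measure K) : Measure (K × K) :=
  (2⁻¹ : ℝ≥0∞) • (Measure.map (fun j => (j, z)) p + Measure.map (fun j => (z, j)) p)

/-- The distribution `μ_{n,p}` of random `K`-interpretations on universe `[n]`,
presented on the sample space assigning to each atom the pair of values of its
positive and negated literal. -/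
noncomputable def muI [MeasurableSpace K] [Fintype R] (z : K) (p : Measure K) (n : ℕ) :
    Measure (Atoms R ar (Fin n) → K × K) :=
  Measure.pi fun _ => atomMeasure z p
/-- First-order formulae in negation normal form over the vocabulary `(R, ar)`,
written with the *excluding* quantifiers `∃≠` (`exq`) and `∀≠` (`allq`) which range
only over elements distinct from the values of all variables currently in scope. -/
inductive FOx (R : Type) (ar : R → ℕ) : ℕ → Type
  | eq   : {i : ℕ} → Fin i → Fin i → FOx R ar i
  | ne   : {i : ℕ} → Fin i → Fin i → FOx R ar i
  | atom : {i : ℕ} → (r : R) → (Fin (ar r) → Fin i) → Bool → FOx R ar i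
  | or   : {i : ℕ} → FOx R ar i → FOx R ar i → FOx R ar i
  | and  : {i : ℕ} → FOx R ar i → FOx R ar i → FOx R ar i
  | exq  : {i : ℕ} → FOx R ar (i+1) → FOx R ar i
  | allq : {i : ℕ} → FOx R ar (i+1) → FOx R ar i

/-- The width of a formula: the maximal number of variables simultaneously in scope.
A formula `ψ : FOx R ar i` with `ψ.width ≤ k` is a formula of the `k`-variable
fragment `FO^k`. -/
def FOx.width : {i : ℕ} → FOx R ar i → ℕ
  | i, .eq _ _ => i
  | i, .ne _ _ => i
  | i, .atom _ _ _ => i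
  | _, .or φ θ => max φ.width θ.width
  | _, .and φ θ => max φ.width θ.width
  | _, .exq φ => φ.width
  | _, .allq φ => φ.width

/-- Semantics of formulae with excluding quantifiers in a lattice semiring. -/
noncomputable def evalLx [DistribLattice K] [BoundedOrder K] [Fintype A] [DecidableEq A]
    (π : Lit R ar A → K) : {i : ℕ} → FOx R ar i → (Fin i → A) → K
  | _, .eq j l, v => if v j = v l then ⊤ else ⊥
  | _, .ne j l, v => if v j = v l then ⊥ else ⊤
  | _, .atom r as pos, v => π ⟨r, fun j => v (as j), pos⟩
  | _, .or φ θ, v => evalLx π φ v ⊔ evalLx π θ v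
  | _, .and φ θ, v => evalLx π φ v ⊓ evalLx π θ v
  | _, .exq φ, v => (Finset.univ.filter fun b : A => ∀ j, v j ≠ b).sup
      fun b => evalLx π φ (Fin.snoc v b)
  | _, .allq φ, v => (Finset.univ.filter fun b : A => ∀ j, v j ≠ b).inf
      fun b => evalLx π φ (Fin.snoc v b)

/-- Semantics of formulae with excluding quantifiers in a commutative semiring. -/
noncomputable def evalSx [CommSemiring K] [Fintype A] [DecidableEq A]
    (π : Lit R ar A → K) : {i : ℕ} → FOx R ar i → (Fin i → A) → K
  | _, .eq j l, v => if v j = v l then 1 else 0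
  | _, .ne j l, v => if v j = v l then 0 else 1
  | _, .atom r as pos, v => π ⟨r, fun j => v (as j), pos⟩
  | _, .or φ θ, v => evalSx π φ v + evalSx π θ v
  | _, .and φ θ, v => evalSx π φ v * evalSx π θ v
  | _, .exq φ, v => ∑ b ∈ (Finset.univ.filter fun b : A => ∀ j, v j ≠ b),
      evalSx π φ (Fin.snoc v b)
  | _, .allq φ, v => ∏ b ∈ (Finset.univ.filter fun b : A => ∀ j, v j ≠ b),
      evalSx π φ (Fin.snoc v b)

/-- Extension of an assignment of values to the literals in variables `x_1, …, x_i`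
to the literals in variables `x_1, …, x_{i+1}`: a literal not containing the new
variable keeps its value under `ρ`, a literal containing the new variable gets its
value from `s`. -/
def extendA {i : ℕ} (ρ : Lit R ar (Fin i) → K) (s : Lit R ar (Fin (i+1)) → K) :
    Lit R ar (Fin (i+1)) → K := fun l =>
  if h : ∀ j, l.args j ≠ Fin.last i
  then ρ ⟨l.rel, fun j => (l.args j).castPred (h j), l.pos⟩
  else s l

/-- Evaluation (in a lattice semiring `K`, with the distinguished element `ε` as
value of `e`) of the polynomial `f_ψ` over the three-element semiring
`E = ({0,e,1}, +, ·)` associated with a formula `ψ` with excluding quantifiers: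
at an existential quantifier we take the supremum over all consistent selector
functions of new literals into `{0,1}`, at a universal quantifier the infimum over
all consistent selector functions into `{0,e}` (selector functions are presented by
maps `s` from the new atoms to `Bool`, telling which of the two complementary
literals is nonzero; the value `f_ψ[ρ]` only depends on their action on the new
literals). -/
noncomputable def fEval [DistribLattice K] [BoundedOrder K] [Fintype R] [DecidableEq R]
    (ε : K) : {i : ℕ} → FOx R ar i → (Lit R ar (Fin i) → K) → K
  | _, .eq j l, _ => if j = l then ⊤ else ⊥
  | _, .ne j l, _ => if j = l then ⊥ else ⊤
  | _, .atom r as pos, ρ => ρ ⟨r, as, pos⟩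
  | _, .or φ θ, ρ => fEval ε φ ρ ⊔ fEval ε θ ρ
  | _, .and φ θ, ρ => fEval ε φ ρ ⊓ fEval ε θ ρ
  | i, .exq φ, ρ => Finset.univ.sup fun s : Atoms R ar (Fin (i+1)) → Bool =>
      fEval ε φ (extendA ρ fun l => if s ⟨l.rel, l.args⟩ = l.pos then ⊤ else ⊥)
  | i, .allq φ, ρ => Finset.univ.inf fun s : Atoms R ar (Fin (i+1)) → Bool =>
      fEval ε φ (extendA ρ fun l => if s ⟨l.rel, l.args⟩ = l.pos then ε else ⊥)
/-- The extension `ρp` (of an atomic type, to the variables `x_1,…,x_{m+1}`) is *large*: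
out of each pair of complementary literals containing the new variable, one is mapped
to `0` and the other to a number `≥ 2`. -/
def LargeExt {m : ℕ} (ρp : Lit R ar (Fin (m+1)) → ℕ) : Prop :=
  ∀ (r : R) (as : Fin (ar r) → Fin (m+1)), (∃ j, as j = Fin.last m) →
    ((ρp ⟨r, as, true⟩ = 0 ∧ 2 ≤ ρp ⟨r, as, false⟩) ∨
     (2 ≤ ρp ⟨r, as, true⟩ ∧ ρp ⟨r, as, false⟩ = 0))

/-- `ρ =_𝔹 ρ'`: the two atomic types map exactly the same literals to `0`. -/
def BoolEq {m : ℕ} (ρ ρ' : Lit R ar (Fin m) → ℕ) : Prop := ∀ l, (ρ l = 0 ↔ ρ' l = 0)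

/-- The strong `(k,γ)`-extension property of an `ℕ`-interpretation: for every tuple and
every extension of its type, at least `γ·|A|` elements realise a large extension with
the same underlying Boolean type. -/
def StrongExtProp (π : Lit R ar A → ℕ) (k : ℕ) (γ : ℝ) : Prop :=
  ∀ m, m < k → ∀ a : Fin m → A, Function.Injective a →
    ∀ ρp : Lit R ar (Fin (m+1)) → ℕ, ModelDefining 0 ρp → Extends ρp (typeOf π a) →
      γ * (Nat.card A) ≤
        ({b : A | b ∉ Set.range a ∧ BoolEq (typeOf π (Fin.snoc a b)) ρp ∧
          LargeExt (typeOf π (Fin.snoc a b))}.ncard : ℝ)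
/-- `∞`-expressions over the indeterminates `X`: formal expressions built from the
indeterminates, constants `0`, `1`, `∞`, binary `+`, `·`, and the unary infinite
power `^∞`. -/
inductive IExp (X : Type) : Type
  | var : X → IExp X
  | zero : IExp X
  | one : IExp X
  | inf : IExp X
  | add : IExp X → IExp X → IExp X
  | mul : IExp X → IExp X → IExp X
  | ipow : IExp X → IExp X

/-- The infinite power on `ℕ^∞`: `0^∞ = 0`, `1^∞ = 1`, `x^∞ = ∞` for `x ≥ 2`. -/
def infPow (x : ℕ∞) : ℕ∞ := if x = 0 then 0 else if x = 1 then 1 else ⊤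

/-- Evaluation of an `∞`-expression in `ℕ^∞ = ℕ ∪ {∞}` under an assignment `σ` of the
indeterminates (with `0·∞ = 0` and `n·∞ = n+∞ = ∞` for `n ≥ 1`). -/
def IExp.eval {X : Type} (σ : X → ℕ∞) : IExp X → ℕ∞
  | .var x => σ x
  | .zero => 0
  | .one => 1
  | .inf => ⊤
  | .add f g => f.eval σ + g.eval σ
  | .mul f g => f.eval σ * g.eval σ
  | .ipow f => infPow (f.eval σ)
/-- Evaluation of the `∞`-expression `g_ψ` associated with a formula `ψ` (with
excluding quantifiers) under an assignment `ρ` of the literals in scope: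
`g_{∃≠ y φ} = ∞·(Σ_s g_φ(ρ,s))` and `g_{∀≠ y φ} = (Π_s g_φ(ρ,s))^∞`, where `s`
ranges over the consistent selector functions mapping the new literals to `{0,∞}`
(presented by maps from the new atoms to `Bool`; the value only depends on the
action on the new literals). -/
noncomputable def gEval [Fintype R] [DecidableEq R] :
    {i : ℕ} → FOx R ar i → (Lit R ar (Fin i) → ℕ∞) → ℕ∞
  | _, .eq j l, _ => if j = l then 1 else 0
  | _, .ne j l, _ => if j = l then 0 else 1
  | _, .atom r as pos, ρ => ρ ⟨r, as, pos⟩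
  | _, .or φ θ, ρ => gEval φ ρ + gEval θ ρ
  | _, .and φ θ, ρ => gEval φ ρ * gEval θ ρ
  | i, .exq φ, ρ => ⊤ * ∑ s : Atoms R ar (Fin (i+1)) → Bool,
      gEval φ (extendA ρ fun l => if s ⟨l.rel, l.args⟩ = l.pos then ⊤ else 0)
  | i, .allq φ, ρ => infPow (∏ s : Atoms R ar (Fin (i+1)) → Bool,
      gEval φ (extendA ρ fun l => if s ⟨l.rel, l.args⟩ = l.pos then ⊤ else 0))


section Aux

variable {R : Type} {ar : R → ℕ}

lemma infPow_eq_zero {x : ℕ∞} : infPow x = 0 ↔ x = 0 := by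
  unfold infPow
  split
  · simp_all
  · split <;> simp_all

lemma infPow_eq_one {x : ℕ∞} : infPow x = 1 ↔ x = 1 := by
  unfold infPow
  split
  · simp_all
  · split <;> simp_all

lemma infPow_of_two_le {x : ℕ∞} (h : 2 ≤ x) : infPow x = ⊤ := by
  unfold infPow
  rw [if_neg, if_neg]
  · rintro rfl; exact absurd h (by norm_num)
  · rintro rfl; exact absurd h (by norm_num)

lemma two_le_of_ne {x : ℕ∞} (h0 : x ≠ 0) (h1 : x ≠ 1) : 2 ≤ x := by
  match x with
  | ⊤ => exact le_top
  | (m : ℕ) =>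
    have hm0 : m ≠ 0 := fun e => h0 (by exact_mod_cast e)
    have hm1 : m ≠ 1 := fun e => h1 (by exact_mod_cast e)
    exact_mod_cast (by omega : 2 ≤ m)

lemma infPow_mono : Monotone infPow := by
  intro x y h
  by_cases hx : x = 0
  · simp [hx, infPow]
  · by_cases hx1 : x = 1
    · subst hx1
      rw [infPow_eq_one.mpr rfl]
      have hy : y ≠ 0 := fun e => hx (le_antisymm (e ▸ h) zero_le)
      exact ENat.one_le_iff_ne_zero.mpr (fun e => hy (infPow_eq_zero.mp e))
    · rw [infPow_of_two_le (two_le_of_ne hx hx1),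
        infPow_of_two_le (le_trans (two_le_of_ne hx hx1) h)]

lemma infPow_zero_transfer {a a' : ℕ∞} (ha : infPow a = infPow a') : a = 0 ↔ a' = 0 := by
  rw [← infPow_eq_zero, ha, infPow_eq_zero]

lemma infPow_one_transfer {a a' : ℕ∞} (ha : infPow a = infPow a') : a = 1 ↔ a' = 1 := by
  rw [← infPow_eq_one, ha, infPow_eq_one]

lemma infPow_congr_add {a b a' b' : ℕ∞} (ha : infPow a = infPow a')
    (hb : infPow b = infPow b') : infPow (a + b) = infPow (a' + b') := by
  by_cases h0 : a = 0
  · have h0' : a' = 0 := (infPow_zero_transfer ha).mp h0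
    simp [h0, h0', hb]
  · have h0' : a' ≠ 0 := fun e => h0 ((infPow_zero_transfer ha).mpr e)
    by_cases hb0 : b = 0
    · have hb0' : b' = 0 := (infPow_zero_transfer hb).mp hb0
      simp [hb0, hb0', ha]
    · have hb0' : b' ≠ 0 := fun e => hb0 ((infPow_zero_transfer hb).mpr e)
      have h2 : (2 : ℕ∞) ≤ a + b :=
        add_le_add (ENat.one_le_iff_ne_zero.mpr h0) (ENat.one_le_iff_ne_zero.mpr hb0)
      have h2' : (2 : ℕ∞) ≤ a' + b' :=
        add_le_add (ENat.one_le_iff_ne_zero.mpr h0') (ENat.one_le_iff_ne_zero.mpr hb0')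
      rw [infPow_of_two_le h2, infPow_of_two_le h2']

lemma infPow_congr_mul {a b a' b' : ℕ∞} (ha : infPow a = infPow a')
    (hb : infPow b = infPow b') : infPow (a * b) = infPow (a' * b') := by
  by_cases h0 : a = 0
  · have h0' : a' = 0 := (infPow_zero_transfer ha).mp h0
    simp [h0, h0']
  · have h0' : a' ≠ 0 := fun e => h0 ((infPow_zero_transfer ha).mpr e)
    by_cases hb0 : b = 0
    · have hb0' : b' = 0 := (infPow_zero_transfer hb).mp hb0
      simp [hb0, hb0']
    · have hb0' : b' ≠ 0 := fun e => hb0 ((infPow_zero_transfer hb).mpr e)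
      by_cases h1 : a = 1
      · have h1' : a' = 1 := (infPow_one_transfer ha).mp h1
        simp [h1, h1', hb]
      · have h1' : a' ≠ 1 := fun e => h1 ((infPow_one_transfer ha).mpr e)
        have h2 : (2:ℕ∞) ≤ a * b := le_trans (two_le_of_ne h0 h1)
          (le_mul_of_one_le_right zero_le (ENat.one_le_iff_ne_zero.mpr hb0))
        have h2' : (2:ℕ∞) ≤ a' * b' := le_trans (two_le_of_ne h0' h1')
          (le_mul_of_one_le_right zero_le (ENat.one_le_iff_ne_zero.mpr hb0'))
        rw [infPow_of_two_le h2, infPow_of_two_le h2']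

lemma infPow_sum_congr {ι : Type*} (t : Finset ι) (f g : ι → ℕ∞)
    (h : ∀ x ∈ t, infPow (f x) = infPow (g x)) :
    infPow (∑ x ∈ t, f x) = infPow (∑ x ∈ t, g x) := by
  induction t using Finset.cons_induction with
  | empty => simp
  | cons x t hx ih =>
    rw [Finset.sum_cons, Finset.sum_cons]
    exact infPow_congr_add (h x (Finset.mem_cons_self x t))
      (ih fun y hy => h y (Finset.mem_cons_of_mem hy))

lemma infPow_prod_congr {ι : Type*} (t : Finset ι) (f g : ι → ℕ∞)
    (h : ∀ x ∈ t, infPow (f x) = infPow (g x)) :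
    infPow (∏ x ∈ t, f x) = infPow (∏ x ∈ t, g x) := by
  induction t using Finset.cons_induction with
  | empty => simp
  | cons x t hx ih =>
    rw [Finset.prod_cons, Finset.prod_cons]
    exact infPow_congr_mul (h x (Finset.mem_cons_self x t))
      (ih fun y hy => h y (Finset.mem_cons_of_mem hy))

lemma infPow_infPow (x : ℕ∞) : infPow (infPow x) = infPow x := by
  unfold infPow
  split
  · simp
  · split
    · simp
    · simp

lemma extendA_zero_congr {i : ℕ} {ρ₁ ρ₂ : Lit R ar (Fin i) → ℕ∞}
    (h : ∀ l, ρ₁ l = 0 ↔ ρ₂ l = 0) (s : Lit R ar (Fin (i+1)) → ℕ∞)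
    (l : Lit R ar (Fin (i+1))) : extendA ρ₁ s l = 0 ↔ extendA ρ₂ s l = 0 := by
  unfold extendA
  split
  · exact h _
  · exact Iff.rfl

lemma extendA_class_congr {i : ℕ} {ρ₁ ρ₂ : Lit R ar (Fin i) → ℕ∞}
    (h : ∀ l, infPow (ρ₁ l) = infPow (ρ₂ l)) (s : Lit R ar (Fin (i+1)) → ℕ∞)
    (l : Lit R ar (Fin (i+1))) : infPow (extendA ρ₁ s l) = infPow (extendA ρ₂ s l) := by
  unfold extendA
  split
  · exact h _
  · rfl

lemma extendA_mono {i : ℕ} {ρ₁ ρ₂ : Lit R ar (Fin i) → ℕ∞}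
    (h : ∀ l, ρ₁ l ≤ ρ₂ l) (s : Lit R ar (Fin (i+1)) → ℕ∞)
    (l : Lit R ar (Fin (i+1))) : extendA ρ₁ s l ≤ extendA ρ₂ s l := by
  unfold extendA
  split
  · exact h _
  · exact le_rfl

lemma gEval_zero_congr [Fintype R] [DecidableEq R] {i : ℕ} (ψ : FOx R ar i)
    {ρ₁ ρ₂ : Lit R ar (Fin i) → ℕ∞} (h : ∀ l, ρ₁ l = 0 ↔ ρ₂ l = 0) :
    (gEval ψ ρ₁ = 0 ↔ gEval ψ ρ₂ = 0) := by
  induction ψ with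
  | eq j l => simp only [gEval]
  | ne j l => simp only [gEval]
  | atom r as pos => exact h _
  | or φ θ ihφ ihθ =>
    simp only [gEval, add_eq_zero]
    rw [ihφ h, ihθ h]
  | and φ θ ihφ ihθ =>
    simp only [gEval, mul_eq_zero]
    rw [ihφ h, ihθ h]
  | exq φ ih =>
    simp only [gEval, mul_eq_zero, ENat.top_ne_zero, false_or, Finset.sum_eq_zero_iff]
    exact forall₂_congr fun s _ => ih (extendA_zero_congr h _)
  | allq φ ih =>
    simp only [gEval, infPow_eq_zero, Finset.prod_eq_zero_iff]
    refine exists_congr fun s => and_congr_right fun _ => ih (extendA_zero_congr h _)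

lemma gEval_mono [Fintype R] [DecidableEq R] {i : ℕ} (ψ : FOx R ar i)
    {ρ₁ ρ₂ : Lit R ar (Fin i) → ℕ∞} (h : ∀ l, ρ₁ l ≤ ρ₂ l) :
    gEval ψ ρ₁ ≤ gEval ψ ρ₂ := by
  induction ψ with
  | eq j l => simp only [gEval]; exact le_rfl
  | ne j l => simp only [gEval]; exact le_rfl
  | atom r as pos => exact h _
  | or φ θ ihφ ihθ => exact add_le_add (ihφ h) (ihθ h)
  | and φ θ ihφ ihθ => exact mul_le_mul' (ihφ h) (ihθ h)
  | exq φ ih =>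
    exact mul_le_mul_right (Finset.sum_le_sum fun s _ => ih (extendA_mono h _)) _
  | allq φ ih =>
    exact infPow_mono (Finset.prod_le_prod' fun s _ => ih (extendA_mono h _))

lemma gEval_class_congr [Fintype R] [DecidableEq R] {i : ℕ} (ψ : FOx R ar i)
    {ρ₁ ρ₂ : Lit R ar (Fin i) → ℕ∞} (h : ∀ l, infPow (ρ₁ l) = infPow (ρ₂ l)) :
    infPow (gEval ψ ρ₁) = infPow (gEval ψ ρ₂) := by
  induction ψ with
  | eq j l => rfl
  | ne j l => rfl
  | atom r as pos => exact h _
  | or φ θ ihφ ihθ =>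
    simp only [gEval]
    exact infPow_congr_add (ihφ h) (ihθ h)
  | and φ θ ihφ ihθ =>
    simp only [gEval]
    exact infPow_congr_mul (ihφ h) (ihθ h)
  | exq φ ih =>
    simp only [gEval]
    exact infPow_congr_mul rfl
      (infPow_sum_congr _ _ _ fun s _ => ih (extendA_class_congr h _))
  | allq φ ih =>
    simp only [gEval]
    rw [infPow_infPow, infPow_infPow]
    exact infPow_prod_congr _ _ _ fun s _ => ih (extendA_class_congr h _)

lemma le_width {i : ℕ} (ψ : FOx R ar i) : i ≤ ψ.width := by
  induction ψ with
  | eq j l => exact le_rfl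
  | ne j l => exact le_rfl
  | atom r as pos => exact le_rfl
  | or φ θ ihφ ihθ => exact le_trans ihφ (le_max_left _ _)
  | and φ θ ihφ ihθ => exact le_trans ihφ (le_max_left _ _)
  | exq φ ih => exact Nat.le_of_succ_le ih
  | allq φ ih => exact Nat.le_of_succ_le ih

lemma snoc_injective {m : ℕ} {a : Fin m → A} (ha : Function.Injective a) {b : A}
    (hb : ∀ j, a j ≠ b) : Function.Injective (Fin.snoc a b) := by
  intro x y h
  induction x using Fin.lastCases with
  | last =>
    induction y using Fin.lastCases with
    | last => rfl
    | cast y =>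
      rw [Fin.snoc_last, Fin.snoc_castSucc] at h
      exact absurd h.symm (hb y)
  | cast x =>
    induction y using Fin.lastCases with
    | last =>
      rw [Fin.snoc_last, Fin.snoc_castSucc] at h
      exact absurd h (hb x)
    | cast y =>
      rw [Fin.snoc_castSucc, Fin.snoc_castSucc] at h
      rw [ha h]

lemma typeOf_snoc_old {K : Type} {m : ℕ} (π : Lit R ar A → K) (a : Fin m → A) (b : A)
    (l : Lit R ar (Fin (m+1))) (h : ∀ j, l.args j ≠ Fin.last m) :
    typeOf π (Fin.snoc a b) l
      = typeOf π a ⟨l.rel, fun j => (l.args j).castPred (h j), l.pos⟩ := by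
  have key : ∀ j, Fin.snoc (α := fun _ => A) a b (l.args j) = a ((l.args j).castPred (h j)) := by
    intro j
    conv_lhs => rw [← Fin.castSucc_castPred (l.args j) (h j)]
    rw [Fin.snoc_castSucc]
  show π _ = π _
  congr 1
  unfold Lit.map
  simp only [key]

/-- The selector function induced by the atomic type of a tuple. -/
def selOf (π : Lit R ar A → ℕ) {m : ℕ} (v : Fin m → A) : Atoms R ar (Fin m) → Bool :=
  fun t => decide (typeOf π v ⟨t.1, t.2, true⟩ ≠ 0)

/-- The canonical model-defining extension of a type along a selector. -/
def rhoPOf (π : Lit R ar A → ℕ) {m : ℕ} (a : Fin m → A)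
    (s : Atoms R ar (Fin (m+1)) → Bool) : Lit R ar (Fin (m+1)) → ℕ := fun l =>
  if h : ∀ j, l.args j ≠ Fin.last m
  then typeOf π a ⟨l.rel, fun j => (l.args j).castPred (h j), l.pos⟩
  else if s ⟨l.rel, l.args⟩ = l.pos then 2 else 0

lemma rhoPOf_md (π : Lit R ar A → ℕ) (hmd : ModelDefining 0 π) {m : ℕ} (a : Fin m → A)
    (s : Atoms R ar (Fin (m+1)) → Bool) : ModelDefining 0 (rhoPOf π a s) := by
  intro r as
  unfold rhoPOf
  by_cases h : ∀ j, as j ≠ Fin.last m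
  · rw [dif_pos h, dif_pos h]
    exact hmd r _
  · rw [dif_neg h, dif_neg h]
    cases hc : s ⟨r, as⟩ <;> simp [hc]

lemma rhoPOf_extends (π : Lit R ar A → ℕ) {m : ℕ} (a : Fin m → A)
    (s : Atoms R ar (Fin (m+1)) → Bool) : Extends (rhoPOf π a s) (typeOf π a) := by
  intro l
  obtain ⟨r, as, pos⟩ := l
  unfold rhoPOf
  have h : ∀ j, ((Lit.mk r as pos).map Fin.castSucc).args j ≠ Fin.last m :=
    fun j => (Fin.castSucc_lt_last _).ne
  rw [dif_pos h]
  show typeOf π a ⟨r, _, pos⟩ = _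
  congr 1

lemma snoc_boolEq (π : Lit R ar A → ℕ) (hmd : ModelDefining 0 π) {m : ℕ}
    (a : Fin m → A) (b : A) (l : Lit R ar (Fin (m+1))) :
    ((typeOf π (Fin.snoc a b) l : ℕ) : ℕ∞) = 0 ↔
      extendA (fun l' => ((typeOf π a l' : ℕ) : ℕ∞))
        (fun l' => if selOf π (Fin.snoc a b) ⟨l'.rel, l'.args⟩ = l'.pos then (⊤:ℕ∞) else 0)
        l = 0 := by
  unfold extendA
  split
  · rename_i h
    rw [typeOf_snoc_old π a b l h]
  · obtain ⟨r, as, pos⟩ := l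
    show _ ↔ (if selOf π (Fin.snoc a b) ⟨r, as⟩ = pos then (⊤:ℕ∞) else 0) = 0
    by_cases hz : typeOf π (Fin.snoc a b) ⟨r, as, true⟩ = 0
    · cases pos
      · have hnz : typeOf π (Fin.snoc a b) ⟨r, as, false⟩ ≠ 0 := (hmd r _).mp hz
        simp [selOf, hz, hnz]
      · simp [selOf, hz]
    · cases pos
      · have hzf : typeOf π (Fin.snoc a b) ⟨r, as, false⟩ = 0 := by
          by_contra hh
          exact hz ((hmd r _).mpr hh)
        simp [selOf, hz, hzf]
      · simp [selOf, hz]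

lemma snoc_classEq (π : Lit R ar A → ℕ) {m : ℕ}
    (a : Fin m → A) (b : A) (s : Atoms R ar (Fin (m+1)) → Bool)
    (hbe : BoolEq (typeOf π (Fin.snoc a b)) (rhoPOf π a s))
    (hlarge : LargeExt (typeOf π (Fin.snoc a b)))
    (l : Lit R ar (Fin (m+1))) :
    infPow ((typeOf π (Fin.snoc a b) l : ℕ) : ℕ∞) =
      infPow (extendA (fun l' => ((typeOf π a l' : ℕ) : ℕ∞))
        (fun l' => if s ⟨l'.rel, l'.args⟩ = l'.pos then (⊤:ℕ∞) else 0) l) := by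
  unfold extendA
  split
  · rename_i h
    rw [typeOf_snoc_old π a b l h]
  · rename_i h
    push_neg at h
    obtain ⟨j0, hj0⟩ := h
    have hbe' := hbe l
    rw [rhoPOf, dif_neg (by push_neg; exact ⟨j0, hj0⟩)] at hbe'
    show _ = infPow (if s ⟨l.rel, l.args⟩ = l.pos then (⊤:ℕ∞) else 0)
    by_cases hc : s ⟨l.rel, l.args⟩ = l.pos
    · rw [if_pos hc]
      rw [if_pos hc] at hbe'
      have hnz : typeOf π (Fin.snoc a b) l ≠ 0 := fun e => by
        have := hbe'.mp e; norm_num at this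
      have h2 : 2 ≤ typeOf π (Fin.snoc a b) l := by
        obtain ⟨r, as, pos⟩ := l
        rcases hlarge r as ⟨j0, hj0⟩ with ⟨hz2, h2⟩ | ⟨h2, hz2⟩
        · cases pos
          · exact h2
          · exact absurd hz2 hnz
        · cases pos
          · exact absurd hz2 hnz
          · exact h2
      rw [infPow_of_two_le (by exact_mod_cast h2)]
      rfl
    · rw [if_neg hc]
      rw [if_neg hc] at hbe'
      have hz : typeOf π (Fin.snoc a b) l = 0 := hbe'.mpr rfl
      rw [hz, Nat.cast_zero]

lemma snoc_le_sel (π : Lit R ar A → ℕ) (hmd : ModelDefining 0 π) {m : ℕ}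
    (a : Fin m → A) (b : A) (l : Lit R ar (Fin (m+1))) :
    ((typeOf π (Fin.snoc a b) l : ℕ) : ℕ∞) ≤
      extendA (fun l' => ((typeOf π a l' : ℕ) : ℕ∞))
        (fun l' => if selOf π (Fin.snoc a b) ⟨l'.rel, l'.args⟩ = l'.pos then (⊤:ℕ∞) else 0)
        l := by
  have hiff := snoc_boolEq π hmd a b l
  unfold extendA at hiff ⊢
  split
  · rename_i h
    rw [typeOf_snoc_old π a b l h]
  · rename_i h
    rw [dif_neg h] at hiff
    show _ ≤ (if selOf π (Fin.snoc a b) ⟨l.rel, l.args⟩ = l.pos then (⊤:ℕ∞) else 0)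
    by_cases hc : selOf π (Fin.snoc a b) ⟨l.rel, l.args⟩ = l.pos
    · rw [if_pos hc]
      exact le_top
    · rw [if_neg hc]
      refine le_of_eq (hiff.mpr ?_)
      show (if selOf π (Fin.snoc a b) ⟨l.rel, l.args⟩ = l.pos then (⊤:ℕ∞) else 0) = 0
      rw [if_neg hc]

lemma enat_prod_eq_one {ι : Type*} {t : Finset ι} {f : ι → ℕ∞} (h : ∏ x ∈ t, f x = 1) :
    ∀ x ∈ t, f x = 1 := by
  intro x hx
  have hnz : ∀ y ∈ t, f y ≠ 0 := by
    intro y hy hzero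
    rw [Finset.prod_eq_zero hy hzero] at h
    norm_num at h
  have h1 : f x ≤ ∏ y ∈ t, f y :=
    Finset.single_le_prod' (fun y hy => ENat.one_le_iff_ne_zero.mpr (hnz y hy)) hx
  rw [h] at h1
  exact le_antisymm h1 (ENat.one_le_iff_ne_zero.mpr (hnz x hx))

end Aux

/-- Let `γ > 0` and let `π` be an `ℕ`-interpretation on `[n]` with
the strong `(k,γ)`-extension property, and assume `γ·n ≥ 2`.  Then for every formula
`ψ(x_1,…,x_i) ∈ FO^k` (in NNF with excluding quantifiers) with associated
`∞`-expression `g_ψ` and every tuple `ā` of distinct elements of `[n]`, either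
(1) `π⟦ψ(ā)⟧ = g_ψ[ρ^π_ā] ∈ ℕ`, or (2) `g_ψ[ρ^π_ā] = ∞` and `π⟦ψ(ā)⟧ ≥ γ·n`. -/
theorem statement_15
    {R : Type} [Fintype R] [DecidableEq R] {ar : R → ℕ}
    (k : ℕ) (γ : ℝ) (hγ : 0 < γ) (n : ℕ) (hγn : 2 ≤ γ * n)
    (π : Lit R ar (Fin n) → ℕ) (hmd : ModelDefining (0 : ℕ) π)
    (hstrong : StrongExtProp π k γ)
    {i : ℕ} (ψ : FOx R ar i) (hw : ψ.width ≤ k)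
    (a : Fin i → Fin n) (ha : Function.Injective a) :
    gEval ψ (fun l => ((typeOf π a l : ℕ) : ℕ∞)) = ((evalSx π ψ a : ℕ) : ℕ∞) ∨
    (gEval ψ (fun l => ((typeOf π a l : ℕ) : ℕ∞)) = ⊤ ∧
      γ * n ≤ ((evalSx π ψ a : ℕ) : ℝ)) := by
  classical
  induction ψ with
  | eq j l =>
    left
    by_cases h : j = l
    · subst h
      simp [gEval, evalSx]
    · have h2 : a j ≠ a l := fun e => h (ha e)
      simp [gEval, evalSx, h, h2]
  | ne j l =>
    left
    by_cases h : j = l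
    · subst h
      simp [gEval, evalSx]
    · have h2 : a j ≠ a l := fun e => h (ha e)
      simp [gEval, evalSx, h, h2]
  | atom r as pos =>
    left
    rfl
  | or φ θ ihφ ihθ =>
    have hwφ : φ.width ≤ k := le_trans (le_max_left _ _) hw
    have hwθ : θ.width ≤ k := le_trans (le_max_right _ _) hw
    simp only [gEval, evalSx]
    rcases ihφ hwφ a ha with h1 | ⟨h1, h1'⟩
    · rcases ihθ hwθ a ha with h2 | ⟨h2, h2'⟩
      · left
        rw [h1, h2]
        push_cast
        ring
      · right
        refine ⟨by rw [h2, add_top], ?_⟩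
        push_cast
        have : (0:ℝ) ≤ ((evalSx π φ a : ℕ) : ℝ) := Nat.cast_nonneg _
        linarith
    · right
      refine ⟨by rw [h1, top_add], ?_⟩
      push_cast
      have : (0:ℝ) ≤ ((evalSx π θ a : ℕ) : ℝ) := Nat.cast_nonneg _
      linarith
  | and φ θ ihφ ihθ =>
    have hwφ : φ.width ≤ k := le_trans (le_max_left _ _) hw
    have hwθ : θ.width ≤ k := le_trans (le_max_right _ _) hw
    simp only [gEval, evalSx]
    rcases ihφ hwφ a ha with h1 | ⟨h1, h1'⟩ <;> rcases ihθ hwθ a ha with h2 | ⟨h2, h2'⟩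
    · left
      rw [h1, h2]
      push_cast
      ring
    · by_cases hz : evalSx π φ a = 0
      · left
        rw [h1, h2, hz]
        simp
      · right
        refine ⟨by rw [h1, h2]; exact WithTop.mul_top (Nat.cast_ne_zero.mpr hz), ?_⟩
        have hle : evalSx π θ a ≤ evalSx π φ a * evalSx π θ a :=
          Nat.le_mul_of_pos_left _ (Nat.pos_of_ne_zero hz)
        calc γ * n ≤ ((evalSx π θ a : ℕ) : ℝ) := h2'
          _ ≤ ((evalSx π φ a * evalSx π θ a : ℕ) : ℝ) := by exact_mod_cast hle
    · by_cases hz : evalSx π θ a = 0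
      · left
        rw [h1, h2, hz]
        simp
      · right
        refine ⟨by rw [h1, h2]; exact WithTop.top_mul (Nat.cast_ne_zero.mpr hz), ?_⟩
        have hle : evalSx π φ a ≤ evalSx π φ a * evalSx π θ a :=
          Nat.le_mul_of_pos_right _ (Nat.pos_of_ne_zero hz)
        calc γ * n ≤ ((evalSx π φ a : ℕ) : ℝ) := h1'
          _ ≤ ((evalSx π φ a * evalSx π θ a : ℕ) : ℝ) := by exact_mod_cast hle
    · right
      refine ⟨by rw [h1, h2]; rfl, ?_⟩
      have hz : evalSx π φ a ≠ 0 := by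
        intro e
        rw [e] at h1'
        norm_num at h1'
        linarith
      have hle : evalSx π θ a ≤ evalSx π φ a * evalSx π θ a :=
        Nat.le_mul_of_pos_left _ (Nat.pos_of_ne_zero hz)
      calc γ * n ≤ ((evalSx π θ a : ℕ) : ℝ) := h2'
        _ ≤ ((evalSx π φ a * evalSx π θ a : ℕ) : ℝ) := by exact_mod_cast hle
  | exq φ ih =>
    rename_i i'
    have hik : i' < k := lt_of_lt_of_le (le_width φ) hw
    simp only [gEval, evalSx]
    by_cases hT : (∑ s : Atoms R ar (Fin (i'+1)) → Bool,
        gEval φ (extendA (fun l => ((typeOf π a l : ℕ) : ℕ∞))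
          fun l => if s ⟨l.rel, l.args⟩ = l.pos then ⊤ else 0)) = 0
    · left
      rw [hT, mul_zero]
      have hall : ∀ b ∈ Finset.univ.filter (fun b : Fin n => ∀ j, a j ≠ b),
          evalSx π φ (Fin.snoc a b) = 0 := by
        intro b hb
        simp only [Finset.mem_filter, Finset.mem_univ, true_and] at hb
        have hzero : gEval φ (fun l => ((typeOf π (Fin.snoc a b) l : ℕ) : ℕ∞)) = 0 := by
          rw [gEval_zero_congr φ (snoc_boolEq π hmd a b)]
          exact (Finset.sum_eq_zero_iff.mp hT) (selOf π (Fin.snoc a b)) (Finset.mem_univ _)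
        rcases ih hw (Fin.snoc a b) (snoc_injective ha hb) with h | ⟨h, _⟩
        · rw [hzero] at h
          exact_mod_cast h.symm
        · rw [hzero] at h
          exact absurd h.symm (by simp)
      rw [Finset.sum_eq_zero hall, Nat.cast_zero]
    · right
      refine ⟨WithTop.top_mul hT, ?_⟩
      obtain ⟨s₀, -, hs₀⟩ := Finset.exists_ne_zero_of_sum_ne_zero hT
      have hcard := hstrong i' hik a ha (rhoPOf π a s₀) (rhoPOf_md π hmd a s₀)
        (rhoPOf_extends π a s₀)
      set S : Set (Fin n) := {b | b ∉ Set.range a ∧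
        BoolEq (typeOf π (Fin.snoc a b)) (rhoPOf π a s₀) ∧
        LargeExt (typeOf π (Fin.snoc a b))} with hS
      have hmem : ∀ b ∈ S.toFinset, 1 ≤ evalSx π φ (Fin.snoc a b) := by
        intro b hb
        rw [Set.mem_toFinset] at hb
        obtain ⟨hbr, hbe, hlg⟩ := hb
        have hbr' : ∀ j, a j ≠ b := fun j e => hbr ⟨j, e⟩
        have hclass := gEval_class_congr φ (snoc_classEq π a b s₀ hbe hlg)
        have hnz : gEval φ (fun l => ((typeOf π (Fin.snoc a b) l : ℕ) : ℕ∞)) ≠ 0 := by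
          intro e
          apply hs₀
          apply infPow_eq_zero.mp
          rw [← hclass]
          exact infPow_eq_zero.mpr e
        rcases ih hw (Fin.snoc a b) (snoc_injective ha hbr') with h | ⟨h, h'⟩
        · rw [h] at hnz
          exact Nat.one_le_iff_ne_zero.mpr (fun e => hnz (by rw [e]; exact Nat.cast_zero))
        · have he : evalSx π φ (Fin.snoc a b) ≠ 0 := by
            intro he
            rw [he] at h'
            norm_num at h'
            linarith
          exact Nat.one_le_iff_ne_zero.mpr he
      have hsub : S.toFinset ⊆ Finset.univ.filter (fun b : Fin n => ∀ j, a j ≠ b) := by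
        intro b hb
        rw [Set.mem_toFinset] at hb
        simp only [Finset.mem_filter, Finset.mem_univ, true_and]
        exact fun j e => hb.1 ⟨j, e⟩
      have hle1 : S.toFinset.card ≤ ∑ b ∈ S.toFinset, evalSx π φ (Fin.snoc a b) := by
        calc S.toFinset.card = ∑ _b ∈ S.toFinset, 1 := by simp
          _ ≤ _ := Finset.sum_le_sum hmem
      have hle2 : (∑ b ∈ S.toFinset, evalSx π φ (Fin.snoc a b)) ≤
          ∑ b ∈ Finset.univ.filter (fun b : Fin n => ∀ j, a j ≠ b),
            evalSx π φ (Fin.snoc a b) :=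
        Finset.sum_le_sum_of_subset hsub
      have hcard' : γ * n ≤ (S.toFinset.card : ℝ) := by
        rw [← Set.ncard_eq_toFinset_card']
        simpa using hcard
      calc γ * n ≤ (S.toFinset.card : ℝ) := hcard'
        _ ≤ _ := by exact_mod_cast le_trans hle1 hle2
  | allq φ ih =>
    rename_i i'
    have hik : i' < k := lt_of_lt_of_le (le_width φ) hw
    simp only [gEval, evalSx]
    by_cases hP0 : (∏ s : Atoms R ar (Fin (i'+1)) → Bool,
        gEval φ (extendA (fun l => ((typeOf π a l : ℕ) : ℕ∞))
          fun l => if s ⟨l.rel, l.args⟩ = l.pos then ⊤ else 0)) = 0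
    · left
      obtain ⟨s₀, -, hs₀⟩ := Finset.prod_eq_zero_iff.mp hP0
      have hcard := hstrong i' hik a ha (rhoPOf π a s₀) (rhoPOf_md π hmd a s₀)
        (rhoPOf_extends π a s₀)
      set S : Set (Fin n) := {b | b ∉ Set.range a ∧
        BoolEq (typeOf π (Fin.snoc a b)) (rhoPOf π a s₀) ∧
        LargeExt (typeOf π (Fin.snoc a b))} with hS
      have hSne : S.Nonempty := by
        apply Set.nonempty_of_ncard_ne_zero
        intro e
        rw [e] at hcard
        simp only [Nat.card_eq_fintype_card, Fintype.card_fin, Nat.cast_zero] at hcard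
        nlinarith
      obtain ⟨b, hbr, hbe, hlg⟩ := hSne
      have hbr' : ∀ j, a j ≠ b := fun j e => hbr ⟨j, e⟩
      have hclass := gEval_class_congr φ (snoc_classEq π a b s₀ hbe hlg)
      have hzero : gEval φ (fun l => ((typeOf π (Fin.snoc a b) l : ℕ) : ℕ∞)) = 0 := by
        apply infPow_eq_zero.mp
        rw [hclass]
        exact infPow_eq_zero.mpr hs₀
      have hE : evalSx π φ (Fin.snoc a b) = 0 := by
        rcases ih hw (Fin.snoc a b) (snoc_injective ha hbr') with h | ⟨h, _⟩
        · rw [hzero] at h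
          exact_mod_cast h.symm
        · rw [hzero] at h
          exact absurd h.symm (by simp)
      have hbf : b ∈ Finset.univ.filter (fun b : Fin n => ∀ j, a j ≠ b) := by
        simp only [Finset.mem_filter, Finset.mem_univ, true_and]
        exact hbr'
      rw [hP0, Finset.prod_eq_zero hbf hE, Nat.cast_zero]
      rfl
    · by_cases hP1 : (∏ s : Atoms R ar (Fin (i'+1)) → Bool,
          gEval φ (extendA (fun l => ((typeOf π a l : ℕ) : ℕ∞))
            fun l => if s ⟨l.rel, l.args⟩ = l.pos then ⊤ else 0)) = 1
      · left
        have hfac := enat_prod_eq_one hP1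
        have hall : ∀ b ∈ Finset.univ.filter (fun b : Fin n => ∀ j, a j ≠ b),
            evalSx π φ (Fin.snoc a b) = 1 := by
          intro b hb
          simp only [Finset.mem_filter, Finset.mem_univ, true_and] at hb
          have hone := hfac (selOf π (Fin.snoc a b)) (Finset.mem_univ _)
          have hle : gEval φ (fun l => ((typeOf π (Fin.snoc a b) l : ℕ) : ℕ∞)) ≤ 1 := by
            rw [← hone]
            exact gEval_mono φ (snoc_le_sel π hmd a b)
          have hnz : gEval φ (fun l => ((typeOf π (Fin.snoc a b) l : ℕ) : ℕ∞)) ≠ 0 := by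
            intro e
            have h0 := (gEval_zero_congr φ (snoc_boolEq π hmd a b)).mp e
            rw [h0] at hone
            exact absurd hone (by norm_num)
          have h1 : gEval φ (fun l => ((typeOf π (Fin.snoc a b) l : ℕ) : ℕ∞)) = 1 :=
            le_antisymm hle (ENat.one_le_iff_ne_zero.mpr hnz)
          rcases ih hw (Fin.snoc a b) (snoc_injective ha hb) with h | ⟨h, _⟩
          · rw [h1] at h
            exact_mod_cast h.symm
          · rw [h1] at h
            norm_num at h
        rw [hP1, Finset.prod_eq_one hall, Nat.cast_one]
        rfl
      · right
        refine ⟨by unfold infPow; rw [if_neg hP0, if_neg hP1], ?_⟩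
        have hnzall : ∀ s : Atoms R ar (Fin (i'+1)) → Bool,
            gEval φ (extendA (fun l => ((typeOf π a l : ℕ) : ℕ∞))
              fun l => if s ⟨l.rel, l.args⟩ = l.pos then ⊤ else 0) ≠ 0 := by
          intro s e
          exact hP0 (Finset.prod_eq_zero (Finset.mem_univ s) e)
        have hex : ∃ s₀ : Atoms R ar (Fin (i'+1)) → Bool,
            gEval φ (extendA (fun l => ((typeOf π a l : ℕ) : ℕ∞))
              fun l => if s₀ ⟨l.rel, l.args⟩ = l.pos then ⊤ else 0) ≠ 1 := by
          by_contra h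
          push_neg at h
          exact hP1 (Finset.prod_eq_one fun s _ => h s)
        obtain ⟨s₀, hs₀⟩ := hex
        have hinf₀ : infPow (gEval φ (extendA (fun l => ((typeOf π a l : ℕ) : ℕ∞))
            fun l => if s₀ ⟨l.rel, l.args⟩ = l.pos then ⊤ else 0)) = ⊤ :=
          infPow_of_two_le (two_le_of_ne (hnzall s₀) hs₀)
        have h1 : ∀ b ∈ Finset.univ.filter (fun b : Fin n => ∀ j, a j ≠ b),
            1 ≤ evalSx π φ (Fin.snoc a b) := by
          intro b hb
          simp only [Finset.mem_filter, Finset.mem_univ, true_and] at hb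
          have hnz : gEval φ (fun l => ((typeOf π (Fin.snoc a b) l : ℕ) : ℕ∞)) ≠ 0 := fun e =>
            hnzall (selOf π (Fin.snoc a b)) ((gEval_zero_congr φ (snoc_boolEq π hmd a b)).mp e)
          rcases ih hw (Fin.snoc a b) (snoc_injective ha hb) with h | ⟨h, h'⟩
          · rw [h] at hnz
            exact Nat.one_le_iff_ne_zero.mpr (fun e => hnz (by rw [e]; exact Nat.cast_zero))
          · have he : evalSx π φ (Fin.snoc a b) ≠ 0 := by
              intro he
              rw [he] at h'
              norm_num at h'
              linarith
            exact Nat.one_le_iff_ne_zero.mpr he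
        have hcard := hstrong i' hik a ha (rhoPOf π a s₀) (rhoPOf_md π hmd a s₀)
          (rhoPOf_extends π a s₀)
        set S : Set (Fin n) := {b | b ∉ Set.range a ∧
          BoolEq (typeOf π (Fin.snoc a b)) (rhoPOf π a s₀) ∧
          LargeExt (typeOf π (Fin.snoc a b))} with hS
        have h2 : ∀ b ∈ S.toFinset, 2 ≤ evalSx π φ (Fin.snoc a b) := by
          intro b hb
          rw [Set.mem_toFinset] at hb
          obtain ⟨hbr, hbe, hlg⟩ := hb
          have hbr' : ∀ j, a j ≠ b := fun j e => hbr ⟨j, e⟩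
          have hclass := (gEval_class_congr φ (snoc_classEq π a b s₀ hbe hlg)).trans hinf₀
          have hnn0 : gEval φ (fun l => ((typeOf π (Fin.snoc a b) l : ℕ) : ℕ∞)) ≠ 0 := by
            intro e
            rw [e] at hclass
            norm_num [infPow] at hclass
          have hnn1 : gEval φ (fun l => ((typeOf π (Fin.snoc a b) l : ℕ) : ℕ∞)) ≠ 1 := by
            intro e
            rw [e] at hclass
            norm_num [infPow] at hclass
          rcases ih hw (Fin.snoc a b) (snoc_injective ha hbr') with h | ⟨h, h'⟩
          · rw [h] at hnn0 hnn1
            have := two_le_of_ne hnn0 hnn1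
            exact_mod_cast this
          · have h2r : (2:ℝ) ≤ ((evalSx π φ (Fin.snoc a b) : ℕ) : ℝ) := le_trans hγn h'
            exact_mod_cast h2r
        have hsub : S.toFinset ⊆ Finset.univ.filter (fun b : Fin n => ∀ j, a j ≠ b) := by
          intro b hb
          rw [Set.mem_toFinset] at hb
          simp only [Finset.mem_filter, Finset.mem_univ, true_and]
          exact fun j e => hb.1 ⟨j, e⟩
        have hb2 : 2 ^ S.toFinset.card ≤ ∏ b ∈ S.toFinset, evalSx π φ (Fin.snoc a b) := by
          calc 2 ^ S.toFinset.card = ∏ _b ∈ S.toFinset, 2 := (Finset.prod_const 2).symm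
            _ ≤ _ := Finset.prod_le_prod (fun _ _ => Nat.zero_le _) h2
        have hb1 : (∏ b ∈ S.toFinset, evalSx π φ (Fin.snoc a b)) ≤
            ∏ b ∈ Finset.univ.filter (fun b : Fin n => ∀ j, a j ≠ b),
              evalSx π φ (Fin.snoc a b) :=
          Finset.prod_le_prod_of_subset_of_one_le' hsub (fun b hb _ => h1 b hb)
        have hcardpow : S.toFinset.card ≤ 2 ^ S.toFinset.card :=
          Nat.le_of_lt Nat.lt_two_pow_self
        have hcard' : γ * n ≤ (S.toFinset.card : ℝ) := by
          rw [← Set.ncard_eq_toFinset_card']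
          simpa using hcard
        calc γ * n ≤ (S.toFinset.card : ℝ) := hcard'
          _ ≤ _ := by exact_mod_cast le_trans hcardpow (le_trans hb2 hb1)
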